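/- Every countably infinite linear order is inexact: it admits an order-preserving injection into itself whose image is a proper subset (equivalently, it is order-isomorphic to a proper subset of itself). -/

import Mathlib

open Set

section DMaux

variable {L : Type*} [LinearOrder L]

/-- Auxiliary relation: `a < b` with infinitely many points in between. -/
def DMRel (a b : L) : Prop := a < b ∧ (Set.Icc a b).Infinite

lemma DMRel.trans' {a b c : L} (h1 : DMRel a b) (h2 : DMRel b c) : DMRel a c :=
  ⟨h1.1.trans h2.1, h1.2.mono (Set.Icc_subset_Icc le_rfl h2.1.le)⟩

lemma DMRel.trans'' {a b c : L} (h1 : DMRel a b) (h2 : DMRel b c) : DMRel a c :=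
  ⟨h1.1.trans h2.1, h2.2.mono (Set.Icc_subset_Icc h1.1.le le_rfl)⟩

/-- The "middle" part of the order. -/
def DMM (L : Type*) [LinearOrder L] : Set L :=
  {x | ¬ (Set.Ici x).Finite ∧ ¬ (Set.Iic x).Finite}

/-- The local finiteness hypothesis: every "finite-interval class" is finite. -/
def DMfin (L : Type*) [LinearOrder L] : Prop :=
  ∀ a : L, {y | a ≤ y ∧ (Set.Icc a y).Finite}.Finite ∧ {y | y ≤ a ∧ (Set.Icc y a).Finite}.Finite

lemma dm_between (hfin : DMfin L) {a b : L} (hab : DMRel a b) (p : L) :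
    ∃ c, c ∈ DMM L ∧ c ≠ p ∧ DMRel a c ∧ DMRel c b := by
  have hS : (Set.Icc a b \ ({y | a ≤ y ∧ (Set.Icc a y).Finite} ∪
      {y | y ≤ b ∧ (Set.Icc y b).Finite} ∪ {p})).Infinite :=
    hab.2.diff (((hfin a).1.union (hfin b).2).union (Set.finite_singleton p))
  obtain ⟨c, hc⟩ := hS.nonempty
  obtain ⟨⟨hac, hcb⟩, hc2⟩ := hc
  simp only [Set.mem_union, Set.mem_setOf_eq, Set.mem_singleton_iff, not_or] at hc2
  obtain ⟨⟨h1, h2⟩, h3⟩ := hc2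
  have hacI : (Set.Icc a c).Infinite := fun hf => h1 ⟨hac, hf⟩
  have hcbI : (Set.Icc c b).Infinite := fun hf => h2 ⟨hcb, hf⟩
  have haltc : a < c := lt_of_le_of_ne hac (by
    rintro rfl
    exact hacI (by rw [Set.Icc_self]; exact Set.finite_singleton a))
  have hcltb : c < b := lt_of_le_of_ne hcb (by
    rintro rfl
    exact hcbI (by rw [Set.Icc_self]; exact Set.finite_singleton c))
  refine ⟨c, ⟨fun hf => hcbI (hf.subset Set.Icc_subset_Ici_self),
      fun hf => hacI (hf.subset Set.Icc_subset_Iic_self)⟩, h3, ⟨haltc, hacI⟩, ⟨hcltb, hcbI⟩⟩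

lemma dm_above (hfin : DMfin L) {a : L} (ha : ¬ (Set.Ici a).Finite) (p : L) :
    ∃ c, c ∈ DMM L ∧ c ≠ p ∧ DMRel a c := by
  have hS : (Set.Ici a \ {y | a ≤ y ∧ (Set.Icc a y).Finite}).Infinite :=
    Set.Infinite.diff (fun hf => ha hf) (hfin a).1
  obtain ⟨y, hy1, hy2⟩ := hS.nonempty
  simp only [Set.mem_setOf_eq, not_and] at hy2
  have hI : (Set.Icc a y).Infinite := fun hf => hy2 hy1 hf
  have hlt : a < y := lt_of_le_of_ne hy1 (by
    rintro rfl
    exact hI (by rw [Set.Icc_self]; exact Set.finite_singleton a))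
  obtain ⟨c, hcM, hcp, h1, _⟩ := dm_between hfin ⟨hlt, hI⟩ p
  exact ⟨c, hcM, hcp, h1⟩

lemma dm_below (hfin : DMfin L) {a : L} (ha : ¬ (Set.Iic a).Finite) (p : L) :
    ∃ c, c ∈ DMM L ∧ c ≠ p ∧ DMRel c a := by
  have hS : (Set.Iic a \ {y | y ≤ a ∧ (Set.Icc y a).Finite}).Infinite :=
    Set.Infinite.diff (fun hf => ha hf) (hfin a).2
  obtain ⟨y, hy1, hy2⟩ := hS.nonempty
  simp only [Set.mem_setOf_eq, not_and] at hy2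
  have hI : (Set.Icc y a).Infinite := fun hf => hy2 hy1 hf
  have hlt : y < a := lt_of_le_of_ne hy1 (by
    rintro rfl
    exact hI (by rw [Set.Icc_self]; exact Set.finite_singleton _))
  obtain ⟨c, hcM, hcp, _, h2⟩ := dm_between hfin ⟨hlt, hI⟩ p
  exact ⟨c, hcM, hcp, h2⟩


noncomputable def dmSeq (x : ℕ → L) (P : L → Prop) : ℕ → L
  | k =>
    haveI : Nonempty L := ⟨x 0⟩
    Classical.epsilon (fun c => P c ∧ ∀ j, (h : j < k) →
      (x j < x k → DMRel (dmSeq x P j) c) ∧ (x k < x j → DMRel c (dmSeq x P j)))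
  decreasing_by all_goals exact h


lemma dm_inv (hfin : DMfin L) (x : ℕ → L) (hx : Function.Injective x) (p : L)
    (hp : p ∈ DMM L) (k : ℕ) :
    (dmSeq x (fun c => c ∈ DMM L ∧ c ≠ p) k ∈ DMM L ∧
        dmSeq x (fun c => c ∈ DMM L ∧ c ≠ p) k ≠ p) ∧
      ∀ j, j < k →
        (x j < x k → DMRel (dmSeq x (fun c => c ∈ DMM L ∧ c ≠ p) j)
            (dmSeq x (fun c => c ∈ DMM L ∧ c ≠ p) k)) ∧
        (x k < x j → DMRel (dmSeq x (fun c => c ∈ DMM L ∧ c ≠ p) k)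
            (dmSeq x (fun c => c ∈ DMM L ∧ c ≠ p) j)) := by
  induction k using Nat.strong_induction_on with
  | _ k ih =>
  classical
  haveI : Nonempty L := ⟨p⟩
  set P : L → Prop := fun c => c ∈ DMM L ∧ c ≠ p with hP
  set g : ℕ → L := dmSeq x P with hg
  have pairwise : ∀ i j, i < k → j < k → x i < x j → DMRel (g i) (g j) := by
    intro i j hi hj hij
    rcases lt_trichotomy i j with h | h | h
    · exact ((ih j hj).2 i h).1 hij
    · subst h; exact absurd hij (lt_irrefl _)
    · exact ((ih i hi).2 j h).2 hij
  have key : ∃ c, P c ∧ ∀ j, (h : j < k) →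
      (x j < x k → DMRel (g j) c) ∧ (x k < x j → DMRel c (g j)) := by
    set A := (Finset.range k).filter (fun j => x j < x k) with hA
    set B := (Finset.range k).filter (fun j => x k < x j) with hB
    have hmemA : ∀ j, j ∈ A ↔ j < k ∧ x j < x k := by intro j; simp [hA]
    have hmemB : ∀ j, j ∈ B ↔ j < k ∧ x k < x j := by intro j; simp [hB]
    by_cases hAne : A.Nonempty
    · obtain ⟨j1, hj1, hj1max⟩ := A.exists_max_image x hAne
      have hj1' := (hmemA j1).1 hj1
      have hgj1 : g j1 ∈ DMM L := (ih j1 hj1'.1).1.1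
      have hlow : ∀ j, j < k → x j < x k → (j = j1 ∨ DMRel (g j) (g j1)) := by
        intro j hj hjk
        rcases eq_or_lt_of_le (hj1max j ((hmemA j).2 ⟨hj, hjk⟩)) with h | h
        · exact Or.inl (hx h)
        · exact Or.inr (pairwise j j1 hj hj1'.1 h)
      by_cases hBne : B.Nonempty
      · obtain ⟨j2, hj2, hj2min⟩ := B.exists_min_image x hBne
        have hj2' := (hmemB j2).1 hj2
        have hrel : DMRel (g j1) (g j2) :=
          pairwise j1 j2 hj1'.1 hj2'.1 (hj1'.2.trans hj2'.2)
        obtain ⟨c, hcM, hcp, h1, h2⟩ := dm_between hfin hrel p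
        refine ⟨c, ⟨hcM, hcp⟩, fun j hj => ⟨?_, ?_⟩⟩
        · intro hjk
          rcases hlow j hj hjk with h | h
          · rw [h]; exact h1
          · exact h.trans' h1
        · intro hkj
          rcases eq_or_lt_of_le (hj2min j ((hmemB j).2 ⟨hj, hkj⟩)) with h | h
          · rw [← hx h]; exact h2
          · exact h2.trans' (pairwise j2 j hj2'.1 hj h)
      · obtain ⟨c, hcM, hcp, h1⟩ := dm_above hfin hgj1.1 p
        refine ⟨c, ⟨hcM, hcp⟩, fun j hj => ⟨?_, ?_⟩⟩
        · intro hjk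
          rcases hlow j hj hjk with h | h
          · rw [h]; exact h1
          · exact h.trans' h1
        · intro hkj
          exact absurd ((hmemB j).2 ⟨hj, hkj⟩)
            (by simp [Finset.not_nonempty_iff_eq_empty.1 hBne])
    · by_cases hBne : B.Nonempty
      · obtain ⟨j2, hj2, hj2min⟩ := B.exists_min_image x hBne
        have hj2' := (hmemB j2).1 hj2
        obtain ⟨c, hcM, hcp, h2⟩ := dm_below hfin ((ih j2 hj2'.1).1.1).2 p
        refine ⟨c, ⟨hcM, hcp⟩, fun j hj => ⟨?_, ?_⟩⟩
        · intro hjk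
          exact absurd ((hmemA j).2 ⟨hj, hjk⟩)
            (by simp [Finset.not_nonempty_iff_eq_empty.1 hAne])
        · intro hkj
          rcases eq_or_lt_of_le (hj2min j ((hmemB j).2 ⟨hj, hkj⟩)) with h | h
          · rw [← hx h]; exact h2
          · exact h2.trans' (pairwise j2 j hj2'.1 hj h)
      · obtain ⟨c, hcM, hcp, _⟩ := dm_above hfin hp.1 p
        refine ⟨c, ⟨hcM, hcp⟩, fun j hj => ⟨?_, ?_⟩⟩
        · intro hjk
          exact absurd ((hmemA j).2 ⟨hj, hjk⟩)
            (by simp [Finset.not_nonempty_iff_eq_empty.1 hAne])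
        · intro hkj
          exact absurd ((hmemB j).2 ⟨hj, hkj⟩)
            (by simp [Finset.not_nonempty_iff_eq_empty.1 hBne])
  have hspec := Classical.epsilon_spec key
  have hk : g k = Classical.epsilon (fun c => P c ∧ ∀ j, (h : j < k) →
      (x j < x k → DMRel (g j) c) ∧ (x k < x j → DMRel c (g j))) := by
    conv_lhs => rw [hg, dmSeq]
  rw [hk]
  exact ⟨⟨hspec.1.1, hspec.1.2⟩, fun j hj => hspec.2 j hj⟩


lemma dm_case2 (L : Type*) [LinearOrder L] [Countable L] [Infinite L] (hfin : DMfin L) :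
    ∃ f : L ↪o L, Set.range f ≠ Set.univ := by
  classical
  -- the two finite "ends"
  have hU : {y : L | (Set.Ici y).Finite}.Finite := by
    rcases Set.eq_empty_or_nonempty {y : L | (Set.Ici y).Finite} with h | ⟨u, hu⟩
    · rw [h]; exact Set.finite_empty
    · refine ((hfin u).1.union (hfin u).2).subset ?_
      intro y hy
      rcases le_total u y with h' | h'
      · exact Or.inl ⟨h', hu.subset Set.Icc_subset_Ici_self⟩
      · exact Or.inr ⟨h', hy.subset Set.Icc_subset_Ici_self⟩
  have hV : {y : L | (Set.Iic y).Finite}.Finite := by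
    rcases Set.eq_empty_or_nonempty {y : L | (Set.Iic y).Finite} with h | ⟨u, hu⟩
    · rw [h]; exact Set.finite_empty
    · refine ((hfin u).1.union (hfin u).2).subset ?_
      intro y hy
      rcases le_total u y with h' | h'
      · exact Or.inl ⟨h', hy.subset Set.Icc_subset_Iic_self⟩
      · exact Or.inr ⟨h', hu.subset Set.Icc_subset_Iic_self⟩
  have hMeq : DMM L = ({y : L | (Set.Ici y).Finite} ∪ {y : L | (Set.Iic y).Finite})ᶜ := by
    ext z; simp [DMM, not_or]
  have hM : (DMM L).Infinite := by
    rw [hMeq]; exact Set.Finite.infinite_compl (hU.union hV)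
  obtain ⟨p, hp⟩ := hM.nonempty
  haveI : Infinite ↥(DMM L) := Set.infinite_coe_iff.mpr hM
  haveI : Encodable ↥(DMM L) := Encodable.ofCountable _
  haveI : Denumerable ↥(DMM L) := Denumerable.ofEncodableOfInfinite _
  obtain ⟨e⟩ : Nonempty (ℕ ≃ ↥(DMM L)) := ⟨(Denumerable.eqv _).symm⟩
  set x : ℕ → L := fun n => ((e n : L)) with hxdef
  have hx : Function.Injective x := fun m n h =>
    e.injective (Subtype.coe_injective h)
  set P : L → Prop := fun c => c ∈ DMM L ∧ c ≠ p with hP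
  set g : ℕ → L := dmSeq x P with hgdef
  have hinv := dm_inv hfin x hx p hp
  -- comparison of M with its complement
  have hMu : ∀ {m u : L}, m ∈ DMM L → (Set.Ici u).Finite → m < u := by
    intro m u hm hu
    by_contra h
    push_neg at h
    exact hm.1 (hu.subset (Set.Ici_subset_Ici.2 h))
  have hvM : ∀ {m v : L}, m ∈ DMM L → (Set.Iic v).Finite → v < m := by
    intro m v hm hv
    by_contra h
    push_neg at h
    exact hm.2 (hv.subset (Set.Iic_subset_Iic.2 h))
  set f : L → L := fun y => if h : y ∈ DMM L then g (e.symm ⟨y, h⟩) else y with hfdef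
  have hfmem : ∀ (y : L) (h : y ∈ DMM L), f y = g (e.symm ⟨y, h⟩) := by
    intro y h; simp [hfdef, h]
  have hfnot : ∀ (y : L), y ∉ DMM L → f y = y := by
    intro y h; simp [hfdef, h]
  have hxsymm : ∀ (y : L) (h : y ∈ DMM L), x (e.symm ⟨y, h⟩) = y := by
    intro y h; simp [hxdef]
  have hmono : StrictMono f := by
    intro a b hab
    by_cases ha : a ∈ DMM L <;> by_cases hb : b ∈ DMM L
    · rw [hfmem a ha, hfmem b hb]
      set ja := e.symm ⟨a, ha⟩
      set jb := e.symm ⟨b, hb⟩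
      have hxab : x ja < x jb := by rw [hxsymm a ha, hxsymm b hb]; exact hab
      rcases lt_trichotomy ja jb with h | h | h
      · exact (((hinv jb).2 ja h).1 hxab).1
      · rw [h] at hxab; exact absurd hxab (lt_irrefl _)
      · exact (((hinv ja).2 jb h).2 hxab).1
    · -- b not in M
      have hb' : (Set.Ici b).Finite ∨ (Set.Iic b).Finite := by
        by_contra h; push_neg at h; exact hb ⟨h.1, h.2⟩
      rcases hb' with h | h
      · rw [hfmem a ha, hfnot b hb]
        exact hMu ((hinv (e.symm ⟨a, ha⟩)).1.1) h
      · exact absurd (hvM ha h) (not_lt.2 hab.le)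
    · have ha' : (Set.Ici a).Finite ∨ (Set.Iic a).Finite := by
        by_contra h; push_neg at h; exact ha ⟨h.1, h.2⟩
      rcases ha' with h | h
      · exact absurd (hMu hb h) (not_lt.2 hab.le)
      · rw [hfnot a ha, hfmem b hb]
        exact hvM ((hinv (e.symm ⟨b, hb⟩)).1.1) h
    · rw [hfnot a ha, hfnot b hb]; exact hab
  refine ⟨OrderEmbedding.ofStrictMono f hmono, ?_⟩
  intro hr
  have hpr : p ∈ Set.range (OrderEmbedding.ofStrictMono f hmono) := by
    rw [hr]; exact Set.mem_univ p
  obtain ⟨y, hy⟩ := hpr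
  by_cases h : y ∈ DMM L
  · have : f y = p := hy
    rw [hfmem y h] at this
    exact (hinv (e.symm ⟨y, h⟩)).1.2 this
  · have : f y = p := hy
    rw [hfnot y h] at this
    exact h (this ▸ hp)


lemma dm_caseUp (L : Type*) [LinearOrder L] (a : L)
    (hD : {y | a ≤ y ∧ (Set.Icc a y).Finite}.Infinite) :
    ∃ f : L ↪o L, Set.range f ≠ Set.univ := by
  classical
  set D := {y | a ≤ y ∧ (Set.Icc a y).Finite} with hDdef
  have haD : a ∈ D := ⟨le_rfl, by rw [Set.Icc_self]; exact Set.finite_singleton a⟩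
  have hconv : ∀ {u v : L}, u ∈ D → v ∈ D → ∀ z, u ≤ z → z ≤ v → z ∈ D := by
    intro u v hu hv z hz1 hz2
    exact ⟨hu.1.trans hz1, hv.2.subset (Set.Icc_subset_Icc le_rfl hz2)⟩
  have hnext : ∀ y ∈ D, ∃ m, (m ∈ D ∧ y < m) ∧ ∀ z ∈ D, y < z → m ≤ z := by
    intro y hy
    have hfin1 : (D ∩ Set.Iic y).Finite :=
      hy.2.subset (fun z hz => ⟨hz.1.1, hz.2⟩)
    have hne : (D \ Set.Iic y).Nonempty := by
      by_contra h
      rw [Set.not_nonempty_iff_eq_empty, Set.diff_eq_empty] at h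
      exact hD (hfin1.subset (fun z hz => ⟨hz, h hz⟩))
    obtain ⟨w, hwD, hwy⟩ := hne
    have hwy' : y < w := not_le.1 hwy
    have hfin2 : ({z | z ∈ D ∧ y < z ∧ z ≤ w}).Finite :=
      hwD.2.subset (fun z hz => ⟨hz.1.1, hz.2.2⟩)
    obtain ⟨m, hm, hmin⟩ := Set.exists_min_image _ id hfin2 ⟨w, hwD, hwy', le_rfl⟩
    refine ⟨m, ⟨hm.1, hm.2.1⟩, ?_⟩
    intro z hz hyz
    rcases le_total z w with h' | h'
    · exact hmin z ⟨hz, hyz, h'⟩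
    · exact (hmin w ⟨hwD, hwy', le_rfl⟩).trans h'
  choose! nxt hnxt using hnext
  set f : L → L := fun y => if y ∈ D then nxt y else y with hfdef
  have hDout : ∀ {u v : L}, u ∈ D → v ∉ D → u < v → ∀ d ∈ D, d < v := by
    intro u v hu hv huv d hd
    by_contra h
    push_neg at h
    exact hv (hconv hu hd v huv.le h)
  have hmono : StrictMono f := by
    intro u v huv
    by_cases hu : u ∈ D <;> by_cases hv : v ∈ D
    · simp only [hfdef, if_pos hu, if_pos hv]
      exact lt_of_le_of_lt ((hnxt u hu).2 v hv huv) ((hnxt v hv).1.2)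
    · simp only [hfdef, if_pos hu, if_neg hv]
      exact hDout hu hv huv (nxt u) (hnxt u hu).1.1
    · simp only [hfdef, if_neg hu, if_pos hv]
      exact huv.trans (hnxt v hv).1.2
    · simp only [hfdef, if_neg hu, if_neg hv]; exact huv
  refine ⟨OrderEmbedding.ofStrictMono f hmono, ?_⟩
  intro hr
  have hmem : a ∈ Set.range (OrderEmbedding.ofStrictMono f hmono) := by
    rw [hr]; exact Set.mem_univ a
  obtain ⟨y, hy⟩ := hmem
  have hy' : f y = a := hy
  by_cases h : y ∈ D
  · simp only [hfdef, if_pos h] at hy'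
    have hlt := (hnxt y h).1.2
    rw [hy'] at hlt
    exact absurd hlt (not_lt.2 h.1)
  · simp only [hfdef, if_neg h] at hy'
    exact h (hy' ▸ haD)

end DMaux

/-- (Dushnik–Miller) Every countably infinite linear order is inexact: it admits
an order-embedding into itself whose image is a proper subset. -/
theorem countable_infinite_linear_order_inexact
    (L : Type*) [LinearOrder L] [Countable L] [Infinite L] :
    ∃ f : L ↪o L, Set.range f ≠ Set.univ := by
  by_cases hup : ∃ a : L, {y | a ≤ y ∧ (Set.Icc a y).Finite}.Infinite
  · obtain ⟨a, ha⟩ := hup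
    exact dm_caseUp L a ha
  by_cases hdn : ∃ a : L, {y | y ≤ a ∧ (Set.Icc y a).Finite}.Infinite
  · obtain ⟨a, ha⟩ := hdn
    have ha' : {y : Lᵒᵈ | OrderDual.toDual a ≤ y ∧
        (Set.Icc (OrderDual.toDual a) y).Finite}.Infinite := by
      have himg : {y : Lᵒᵈ | OrderDual.toDual a ≤ y ∧ (Set.Icc (OrderDual.toDual a) y).Finite}
          = OrderDual.toDual '' {y : L | y ≤ a ∧ (Set.Icc y a).Finite} := by
        ext z
        constructor
        · intro hz
          refine ⟨OrderDual.ofDual z, ⟨hz.1, ?_⟩, rfl⟩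
          exact hz.2.preimage (OrderDual.toDual.injective.injOn)
            |>.subset (fun w hw => by exact ⟨hw.2, hw.1⟩)
        · rintro ⟨w, hw, rfl⟩
          refine ⟨hw.1, ?_⟩
          exact hw.2.preimage (OrderDual.ofDual.injective.injOn)
            |>.subset (fun z hz => by exact ⟨hz.2, hz.1⟩)
      rw [himg]
      exact ha.image (OrderDual.toDual.injective.injOn)
    obtain ⟨f, hf⟩ := dm_caseUp Lᵒᵈ (OrderDual.toDual a) ha'
    have hmono : StrictMono (fun z : L => OrderDual.ofDual (f (OrderDual.toDual z))) := by
      intro u v huv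
      exact f.strictMono (by exact huv : OrderDual.toDual v < OrderDual.toDual u)
    refine ⟨OrderEmbedding.ofStrictMono _ hmono, ?_⟩
    intro hr
    apply hf
    rw [Set.eq_univ_iff_forall] at hr ⊢
    intro z
    obtain ⟨u, hu⟩ := hr (OrderDual.ofDual z)
    exact ⟨OrderDual.toDual u, congrArg OrderDual.toDual hu⟩
  push_neg at hup hdn
  have hfin : DMfin L := fun a =>
    ⟨hup a, hdn a⟩
  exact dm_case2 L hfin
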